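/- Let G = (V, E) be a finite simple graph, for each v ∈ V let X_v be a set, and let X ⊆ ∏_{v∈V} X_v be d-compatible with G. Let W ⊆ V be an induced forest of G with no isolated vertices, and let L ⊆ W be a set obtained by choosing, from each connected component of G[W], all of its leaves except exactly one. Then x_{L ∪ (V \ W)} d^{|W \ L|}-determines x_{W \ L}; in particular cdim(X) ≤ |V| − |W| + |L|. -/

import Mathlib

section Count

lemma encard_inter_biUnion_le {α β : Type*} (T : Set α) (g : α → β) (n : ℕ)
    (h2 : ∀ y : β, (T ∩ g ⁻¹' {y}).encard ≤ (n : ℕ∞)) (K : Finset β) :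
    (T ∩ ⋃ y ∈ K, g ⁻¹' {y}).encard ≤ ((K.card * n : ℕ) : ℕ∞) := by
  classical
  induction K using Finset.induction_on with
  | empty => simp
  | @insert a K ha ih =>
    have hsplit : T ∩ ⋃ y ∈ insert a K, g ⁻¹' {y}
        ⊆ (T ∩ g ⁻¹' {a}) ∪ (T ∩ ⋃ y ∈ K, g ⁻¹' {y}) := by
      rintro x ⟨hxT, hx⟩
      simp only [Finset.mem_insert, Set.mem_iUnion, exists_prop] at hx
      obtain ⟨y, hy1, hy2⟩ := hx
      rcases hy1 with rfl | hy1
      · exact Or.inl ⟨hxT, hy2⟩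
      · exact Or.inr ⟨hxT, Set.mem_biUnion hy1 hy2⟩
    calc (T ∩ ⋃ y ∈ insert a K, g ⁻¹' {y}).encard
        ≤ ((T ∩ g ⁻¹' {a}) ∪ (T ∩ ⋃ y ∈ K, g ⁻¹' {y})).encard := Set.encard_mono hsplit
      _ ≤ (T ∩ g ⁻¹' {a}).encard + (T ∩ ⋃ y ∈ K, g ⁻¹' {y}).encard := Set.encard_union_le _ _
      _ ≤ (n : ℕ∞) + ((K.card * n : ℕ) : ℕ∞) := add_le_add (h2 a) ih
      _ = (((insert a K).card * n : ℕ) : ℕ∞) := by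
          rw [Finset.card_insert_of_notMem ha]; push_cast; ring

lemma encard_le_mul_of_fibers {α β : Type*} (T : Set α) (g : α → β) (m n : ℕ)
    (h1 : (g '' T).encard ≤ (m : ℕ∞))
    (h2 : ∀ y : β, (T ∩ g ⁻¹' {y}).encard ≤ (n : ℕ∞)) :
    T.encard ≤ ((m * n : ℕ) : ℕ∞) := by
  classical
  have hfin : (g '' T).Finite := Set.finite_of_encard_le_coe h1
  have hcard : hfin.toFinset.card ≤ m := by
    have h := hfin.encard_eq_coe_toFinset_card
    rw [h] at h1
    exact_mod_cast h1
  have hsub : T = T ∩ ⋃ y ∈ hfin.toFinset, g ⁻¹' {y} := by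
    refine (Set.inter_eq_left.mpr ?_).symm
    intro x hx
    exact Set.mem_biUnion (hfin.mem_toFinset.mpr ⟨x, hx, rfl⟩) rfl
  calc T.encard = _ := congrArg Set.encard hsub
    _ ≤ ((hfin.toFinset.card * n : ℕ) : ℕ∞) := encard_inter_biUnion_le T g n h2 _
    _ ≤ ((m * n : ℕ) : ℕ∞) := by exact_mod_cast Nat.mul_le_mul_right n hcard

end Count

/-- `x_A` `d`-determines `x_B`. -/
def Determines {V : Type*} {F : V → Type*} (S : Set (∀ v, F v))
    (A B : Set V) (d : ℕ) : Prop :=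
  ∀ c : ∀ a : A, F a,
    ((fun x : ∀ v, F v => fun b : B => x b) ''
      {x ∈ S | ∀ a : A, x a = c a}).encard ≤ (d : ℕ∞)

section DetLemmas

variable {V : Type*} {F : V → Type*} {S : Set (∀ v, F v)}

lemma Determines.mono_left {A A' B : Set V} {d : ℕ} (h : Determines S A B d)
    (hAA : A ⊆ A') : Determines S A' B d := by
  intro c
  refine le_trans (Set.encard_mono (Set.image_mono ?_))
    (h (fun a => c ⟨a.1, hAA a.2⟩))
  rintro x ⟨hxS, hx⟩
  exact ⟨hxS, fun a => hx ⟨a.1, hAA a.2⟩⟩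

lemma determines_self (A : Set V) : Determines S A A 1 := by
  intro c
  rw [show ((1 : ℕ) : ℕ∞) = 1 from rfl]
  refine Set.encard_le_one_iff.mpr ?_
  rintro z z' ⟨x, ⟨-, hx⟩, rfl⟩ ⟨x', ⟨-, hx'⟩, rfl⟩
  funext b
  show x b.1 = x' b.1
  rw [hx b, hx' b]

lemma determines_empty (A : Set V) : Determines S A (∅ : Set V) 1 := by
  intro c
  rw [show ((1 : ℕ) : ℕ∞) = 1 from rfl]
  refine Set.encard_le_one_iff.mpr ?_
  rintro z z' - -
  funext b
  exact absurd b.2 (Set.notMem_empty b.1)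

lemma Determines.comp {A B C : Set V} {d₁ d₂ : ℕ}
    (h₁ : Determines S A B d₁) (h₂ : Determines S (A ∪ B) C d₂) :
    Determines S A (B ∪ C) (d₁ * d₂) := by
  classical
  intro c
  set T := (fun x : ∀ v, F v => fun b : ↥(B ∪ C) => x b) ''
    {x ∈ S | ∀ a : A, x a = c a} with hT
  set g : (∀ b : ↥(B ∪ C), F b) → (∀ b : B, F b) :=
    fun z b => z ⟨b.1, Set.mem_union_left C b.2⟩ with hg
  refine encard_le_mul_of_fibers T g d₁ d₂ ?_ ?_
  · have himg : g '' T = (fun x : ∀ v, F v => fun b : B => x b) ''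
        {x ∈ S | ∀ a : A, x a = c a} := by
      rw [hT, Set.image_image]
    rw [himg]
    exact h₁ c
  · intro y
    set c' : ∀ a : ↥(A ∪ B), F a := fun a =>
      if h : a.1 ∈ A then c ⟨a.1, h⟩
      else y ⟨a.1, a.2.resolve_left h⟩ with hc'
    set φ : (∀ b : ↥(B ∪ C), F b) → (∀ b : C, F b) :=
      fun z b => z ⟨b.1, Set.mem_union_right B b.2⟩ with hφ
    have hinj : Set.InjOn φ (T ∩ g ⁻¹' {y}) := by
      rintro z ⟨-, hz⟩ z' ⟨-, hz'⟩ hφz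
      simp only [Set.mem_preimage, Set.mem_singleton_iff] at hz hz'
      funext b
      rcases b.2 with hB | hC
      · have e : b = (⟨b.1, Set.mem_union_left C hB⟩ : ↥(B ∪ C)) := Subtype.ext rfl
        rw [e]
        have h1 := congrFun hz (⟨b.1, hB⟩ : ↥B)
        have h2 := congrFun hz' (⟨b.1, hB⟩ : ↥B)
        exact h1.trans h2.symm
      · have e : b = (⟨b.1, Set.mem_union_right B hC⟩ : ↥(B ∪ C)) := Subtype.ext rfl
        rw [e]
        exact (congrFun hφz (⟨b.1, hC⟩ : ↥C) : _)
    have himg : φ '' (T ∩ g ⁻¹' {y}) ⊆ (fun x : ∀ v, F v => fun b : C => x b) ''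
        {x ∈ S | ∀ a : ↥(A ∪ B), x a = c' a} := by
      rintro - ⟨z, ⟨⟨x, ⟨hxS, hxc⟩, rfl⟩, hzy⟩, rfl⟩
      simp only [Set.mem_preimage, Set.mem_singleton_iff] at hzy
      refine ⟨x, ⟨hxS, ?_⟩, rfl⟩
      intro a
      by_cases hA : a.1 ∈ A
      · simp only [hc', dif_pos hA]
        exact hxc ⟨a.1, hA⟩
      · simp only [hc', dif_neg hA]
        have hB : a.1 ∈ B := a.2.resolve_left hA
        have := congrFun hzy (⟨a.1, hB⟩ : ↥B)
        exact this
    calc (T ∩ g ⁻¹' {y}).encard = (φ '' (T ∩ g ⁻¹' {y})).encard := (hinj.encard_image).symm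
      _ ≤ _ := Set.encard_mono himg
      _ ≤ (d₂ : ℕ∞) := h₂ c'

end DetLemmas

/-- `S` is `d`-compatible with the graph `G`. -/
def Compatible {V : Type*} {F : V → Type*} (S : Set (∀ v, F v))
    (G : SimpleGraph V) (d : ℕ) : Prop :=
  ∀ v w, G.Adj v w →
    Determines S ((insert v (G.neighborSet v)) \ {w}) {w} d

/-- The combinatorial dimension of `S`. -/
noncomputable def cdim {V : Type*} {F : V → Type*} (S : Set (∀ v, F v)) : ℕ :=
  sInf {n : ℕ | ∃ A : Set V, A.ncard = n ∧ ∃ d : ℕ, Determines S A Set.univ d}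

/-- Forest Bound: let `S` be `d`-compatible with `G`, let `W` be an induced
forest of `G` without isolated vertices, and let `L ⊆ W` consist of leaves of
`G[W]` so that from each connected component of `G[W]` exactly one leaf is
excluded from `L`.  Then `x_{L ∪ (V \ W)}` `d^{|W \ L|}`-determines `x_{W \ L}`;
in particular `cdim S ≤ |V| - |W| + |L|`. -/
theorem forest_bound {V : Type*} [Fintype V] (G : SimpleGraph V)
    {F : V → Type*} (S : Set (∀ v, F v)) (d : ℕ)
    (hcomp : Compatible S G d)
    (W : Set V)
    (hforest : (G.induce W).IsAcyclic)
    (hniso : ∀ v ∈ W, (G.neighborSet v ∩ W).Nonempty)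
    (L : Set V) (hLW : L ⊆ W)
    (hleaf : ∀ v ∈ L, (G.neighborSet v ∩ W).ncard = 1)
    (hchoice : ∀ v : W, ∃! w : W, (G.induce W).Reachable v w ∧
      (G.neighborSet (w : V) ∩ W).ncard = 1 ∧ (w : V) ∉ L) :
    Determines S (L ∪ Wᶜ) (W \ L) (d ^ (W \ L).ncard) ∧
      cdim S ≤ Fintype.card V - W.ncard + L.ncard := by
  classical
  set H : SimpleGraph ↥W := G.induce W with hH
  -- unique paths
  have hpu : ∀ {a b : ↥W} (p q : H.Walk a b), p.IsPath → q.IsPath → p = q := by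
    intro a b p q hp hq
    exact congrArg Subtype.val
      (SimpleGraph.isAcyclic_iff_path_unique.mp hforest ⟨p, hp⟩ ⟨q, hq⟩)
  have hlen : ∀ {a b : ↥W} (p : H.Walk a b), p.IsPath → p.length = H.dist a b := by
    intro a b p hp
    obtain ⟨q, hq, hql⟩ := (SimpleGraph.Reachable.exists_path_of_dist ⟨p⟩ :
      ∃ q : H.Walk a b, q.IsPath ∧ q.length = H.dist a b)
    rw [← hql, hpu p q hp hq]
  -- roots
  set root : ↥W → ↥W := fun v => (hchoice v).choose with hroot
  have hrspec : ∀ v : ↥W, H.Reachable v (root v) ∧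
      (G.neighborSet ↑(root v) ∩ W).ncard = 1 ∧ ↑(root v) ∉ L :=
    fun v => (hchoice v).choose_spec.1
  have hruniq : ∀ (v w : ↥W), (H.Reachable v w ∧
      (G.neighborSet ↑w ∩ W).ncard = 1 ∧ ↑w ∉ L) → w = root v :=
    fun v w h => (hchoice v).choose_spec.2 w h
  have hrs : ∀ {a b : ↥W}, H.Reachable a b → root a = root b := by
    intro a b hab
    exact (hruniq a (root b) ⟨hab.trans (hrspec b).1, (hrspec b).2⟩).symm
  set f : ↥W → ℕ := fun v => H.dist (root v) v with hf
  have hfreach : ∀ v : ↥W, H.Reachable (root v) v := fun v => (hrspec v).1.symm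
  -- chosen paths
  have hpath : ∀ v : ↥W, ∃ p : H.Walk (root v) v, p.IsPath ∧ p.length = f v :=
    fun v => (hfreach v).exists_path_of_dist
  set P : ∀ v : ↥W, H.Walk (root v) v := fun v => (hpath v).choose with hPdef
  have hP : ∀ v : ↥W, (P v).IsPath ∧ (P v).length = f v := fun v => (hpath v).choose_spec
  -- walk dichotomy in an acyclic graph
  have dichW : ∀ {r a b : ↥W} (hab : H.Adj a b) (pa : H.Walk r a) (pb : H.Walk r b),
      pa.IsPath → pb.IsPath → pb = pa.concat hab ∨ pa = pb.concat hab.symm := by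
    intro r a b hab pa pb hpa hpb
    by_cases hb : b ∈ pa.support
    · right
      have hq : (pa.takeUntil b hb).IsPath := hpa.takeUntil hb
      have hna : a ∉ (pa.takeUntil b hb).support := by
        intro ha
        have hspec := SimpleGraph.Walk.take_spec pa hb
        have hnd := hpa.support_nodup
        rw [← hspec, SimpleGraph.Walk.support_append] at hnd
        have hadrop : a ∈ (pa.dropUntil b hb).support.tail := by
          have hmem : a ∈ (pa.dropUntil b hb).support :=
            SimpleGraph.Walk.end_mem_support _
          rw [SimpleGraph.Walk.support_eq_cons] at hmem
          rcases List.mem_cons.mp hmem with h | h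
          · exact absurd h hab.ne
          · exact h
        exact (List.disjoint_of_nodup_append hnd) ha hadrop
      have hcp : ((pa.takeUntil b hb).concat hab.symm).IsPath := by
        rw [SimpleGraph.Walk.isPath_def, SimpleGraph.Walk.support_concat]
        rw [List.nodup_append']
        refine ⟨hq.support_nodup, List.nodup_singleton a, ?_⟩
        intro x hx hx'
        rw [List.mem_singleton] at hx'
        subst hx'
        exact hna hx
      have h1 := hpu pa ((pa.takeUntil b hb).concat hab.symm) hpa hcp
      have h2 := hpu pb (pa.takeUntil b hb) hpb hq
      rw [h2]; exact h1
    · left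
      have hcp : ((pa.concat hab)).IsPath := by
        rw [SimpleGraph.Walk.isPath_def, SimpleGraph.Walk.support_concat]
        rw [List.nodup_append']
        refine ⟨hpa.support_nodup, List.nodup_singleton b, ?_⟩
        intro x hx hx'
        rw [List.mem_singleton] at hx'
        subst hx'
        exact hb hx
      exact hpu pb (pa.concat hab) hpb hcp
  -- paths to b rebased at root a
  have hPb : ∀ {a b : ↥W} (hab : H.Adj a b),
      ∃ pb : H.Walk (root a) b, pb.IsPath ∧ pb.length = f b := by
    intro a b hab
    refine ⟨(P b).copy (hrs hab.reachable).symm rfl, ?_, ?_⟩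
    · simpa using (hP b).1
    · simpa using (hP b).2
  have dichnum : ∀ (a b : ↥W), H.Adj a b → f b = f a + 1 ∨ f a = f b + 1 := by
    intro a b hab
    obtain ⟨pb, hpb, hpbl⟩ := hPb hab
    rcases dichW hab (P a) pb (hP a).1 hpb with h | h
    · left
      have := congrArg SimpleGraph.Walk.length h
      rwa [SimpleGraph.Walk.length_concat, hpbl, (hP a).2] at this
    · right
      have := congrArg SimpleGraph.Walk.length h
      rwa [SimpleGraph.Walk.length_concat, hpbl, (hP a).2] at this
  have parent_uniq : ∀ (a b b' : ↥W), H.Adj a b → H.Adj a b' →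
      f a = f b + 1 → f a = f b' + 1 → b = b' := by
    intro a b b' hb hb' h1 h2
    obtain ⟨pb, hpb, hpbl⟩ := hPb hb
    obtain ⟨pb', hpb', hpbl'⟩ := hPb hb'
    rcases dichW hb (P a) pb (hP a).1 hpb with h | h
    · have := congrArg SimpleGraph.Walk.length h
      rw [SimpleGraph.Walk.length_concat, hpbl, (hP a).2] at this
      omega
    rcases dichW hb' (P a) pb' (hP a).1 hpb' with h' | h'
    · have := congrArg SimpleGraph.Walk.length h'
      rw [SimpleGraph.Walk.length_concat, hpbl', (hP a).2] at this
      omega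
    obtain ⟨hv, -⟩ := SimpleGraph.Walk.concat_inj (h ▸ h' : pb.concat hb.symm = pb'.concat hb'.symm)
    exact hv
  have fzero : ∀ v : ↥W, f v = 0 → v = root v := by
    intro v h
    exact ((hfreach v).dist_eq_zero_iff.mp h).symm
  have hadjGH : ∀ (a b : ↥W), G.Adj ↑a ↑b → H.Adj a b := by
    intro a b h
    exact h
  have key : ∀ u : ↥W, ↑u ∉ L → ∃ v : ↥W, H.Adj u v ∧ f v = f u + 1 ∧
      ∀ y : ↥W, H.Adj v y → y ≠ u → f y = f u + 2 := by
    intro u huL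
    have step1 : ∃ v : ↥W, H.Adj u v ∧ f v = f u + 1 := by
      by_cases hl : (G.neighborSet ↑u ∩ W).ncard = 1
      · have hru : u = root u := hruniq u u ⟨SimpleGraph.Reachable.refl u, hl, huL⟩
        have hfu : f u = 0 := by
          rw [hf]
          simp only []
          rw [← hru, SimpleGraph.dist_self]
        obtain ⟨p, hp⟩ := hniso ↑u u.2
        have hv : H.Adj u ⟨p, hp.2⟩ := hadjGH u ⟨p, hp.2⟩ hp.1
        rcases dichnum u ⟨p, hp.2⟩ hv with h | h
        · exact ⟨⟨p, hp.2⟩, hv, h⟩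
        · omega
      · have h1 : 0 < (G.neighborSet ↑u ∩ W).ncard :=
          (Set.ncard_pos (Set.toFinite _)).mpr (hniso ↑u u.2)
        have h2 : 1 < (G.neighborSet ↑u ∩ W).ncard := by omega
        obtain ⟨b₁, b₂, hb₁, hb₂, hne⟩ := (Set.one_lt_ncard_iff (Set.toFinite _)).mp h2
        have hfu : f u ≠ 0 := by
          intro h0
          refine hl ?_
          rw [fzero u h0]
          exact (hrspec u).2.1
        have hv₁ : H.Adj u ⟨b₁, hb₁.2⟩ := hadjGH _ _ hb₁.1
        have hv₂ : H.Adj u ⟨b₂, hb₂.2⟩ := hadjGH _ _ hb₂.1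
        rcases dichnum u ⟨b₁, hb₁.2⟩ hv₁ with h | h
        · exact ⟨_, hv₁, h⟩
        rcases dichnum u ⟨b₂, hb₂.2⟩ hv₂ with h' | h'
        · exact ⟨_, hv₂, h'⟩
        exact absurd (congrArg Subtype.val (parent_uniq u _ _ hv₁ hv₂ h h')) hne
    obtain ⟨v, huv, hfv⟩ := step1
    refine ⟨v, huv, hfv, ?_⟩
    intro y hvy hyu
    rcases dichnum v y hvy with h | h
    · omega
    · exact absurd (parent_uniq v y u hvy huv.symm (by omega) (by omega)) hyu
  -- the global height function
  set g : V → ℕ := fun x => if h : x ∈ W then f ⟨x, h⟩ else 0 with hg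
  -- main induction
  have main : ∀ (n : ℕ) (U : Set V), U ⊆ W \ L → U.ncard = n →
      Determines S ((L ∪ Wᶜ) ∪ ((W \ L) \ U)) U (d ^ n) := by
    intro n
    induction n with
    | zero =>
      intro U hU hcard
      have hUe : U = ∅ := (Set.ncard_eq_zero (Set.toFinite U)).mp hcard
      rw [hUe, pow_zero]
      exact determines_empty _
    | succ n ih =>
      intro U hU hcard
      have hUne : U.Nonempty := by
        rw [Set.nonempty_iff_ne_empty]
        intro h
        rw [h, Set.ncard_empty] at hcard
        omega
      obtain ⟨u, huU, hmax⟩ := Set.exists_max_image U g (Set.toFinite U) hUne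
      have huWL : u ∈ W \ L := hU huU
      have huW : u ∈ W := huWL.1
      obtain ⟨v, huv, hfv, hyall⟩ := key ⟨u, huW⟩ huWL.2
      have hKd : Determines S ((L ∪ Wᶜ) ∪ ((W \ L) \ U)) {u} d := by
        refine (hcomp ↑v u huv.symm).mono_left ?_
        rintro y ⟨hy1, hy2⟩
        rw [Set.mem_singleton_iff] at hy2
        by_cases hyW : y ∈ W
        swap
        · exact Or.inl (Or.inr hyW)
        by_cases hyL : y ∈ L
        · exact Or.inl (Or.inl hyL)
        have hgy : f ⟨u, huW⟩ < f ⟨y, hyW⟩ := by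
          rcases Set.mem_insert_iff.mp hy1 with h | h
          · have he : (⟨y, hyW⟩ : ↥W) = v := Subtype.ext h
            rw [he]
            omega
          · have hyv : H.Adj v ⟨y, hyW⟩ := hadjGH _ _ h
            have hne : (⟨y, hyW⟩ : ↥W) ≠ ⟨u, huW⟩ := by
              intro he
              exact hy2 (congrArg Subtype.val he)
            have := hyall ⟨y, hyW⟩ hyv hne
            omega
        have hyU : y ∉ U := by
          intro hyU
          have hle := hmax y hyU
          rw [hg] at hle
          simp only [dif_pos hyW, dif_pos huW] at hle
          omega
        exact Or.inr ⟨⟨hyW, hyL⟩, hyU⟩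
      have hset : ((L ∪ Wᶜ) ∪ ((W \ L) \ U)) ∪ {u}
          = (L ∪ Wᶜ) ∪ ((W \ L) \ (U \ {u})) := by
        ext x
        simp only [Set.mem_union, Set.mem_diff, Set.mem_compl_iff, Set.mem_singleton_iff]
        constructor
        · rintro (((h | h) | ⟨h1, h2⟩) | rfl)
          · tauto
          · tauto
          · tauto
          · exact Or.inr ⟨huWL, fun hc => hc.2 rfl⟩
        · rintro (h | ⟨h1, h2⟩)
          · tauto
          · by_cases hx : x = u
            · tauto
            · exact Or.inl (Or.inr ⟨h1, fun hc => h2 ⟨hc, hx⟩⟩)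
      have hih : Determines S (((L ∪ Wᶜ) ∪ ((W \ L) \ U)) ∪ {u}) (U \ {u}) (d ^ n) := by
        rw [hset]
        refine ih (U \ {u}) (fun x hx => hU hx.1) ?_
        rw [Set.ncard_diff_singleton_of_mem huU, hcard]
        omega
      have hres := hKd.comp hih
      have hU' : {u} ∪ (U \ {u}) = U := by
        rw [Set.singleton_union, Set.insert_diff_singleton, Set.insert_eq_self.mpr huU]
      rw [hU'] at hres
      have hd : d * d ^ n = d ^ (n + 1) := by
        rw [pow_succ, mul_comm]
      rwa [hd] at hres
  have hmain : Determines S (L ∪ Wᶜ) (W \ L) (d ^ (W \ L).ncard) := by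
    have h := main (W \ L).ncard (W \ L) subset_rfl rfl
    rwa [Set.diff_self, Set.union_empty] at h
  refine ⟨hmain, ?_⟩
  have hA1 : Determines S (L ∪ Wᶜ) ((L ∪ Wᶜ) ∪ (W \ L)) (1 * d ^ (W \ L).ncard) :=
    (determines_self _).comp (hmain.mono_left Set.subset_union_left)
  have huniv : (L ∪ Wᶜ) ∪ (W \ L) = (Set.univ : Set V) := by
    ext x
    simp only [Set.mem_union, Set.mem_compl_iff, Set.mem_diff, Set.mem_univ, iff_true]
    by_cases hx : x ∈ W
    · by_cases hxL : x ∈ L <;> tauto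
    · tauto
  rw [huniv] at hA1
  have hmem : (L ∪ Wᶜ).ncard ∈
      {n : ℕ | ∃ A : Set V, A.ncard = n ∧ ∃ d : ℕ, Determines S A Set.univ d} :=
    ⟨L ∪ Wᶜ, rfl, _, hA1⟩
  have hdisj : Disjoint L Wᶜ := Set.disjoint_left.mpr fun x hxL hxW => hxW (hLW hxL)
  have hcard : (L ∪ Wᶜ).ncard = L.ncard + Wᶜ.ncard :=
    Set.ncard_union_eq hdisj (Set.toFinite _) (Set.toFinite _)
  have hcompl := Set.ncard_add_ncard_compl W
  rw [Nat.card_eq_fintype_card] at hcompl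
  calc cdim S ≤ (L ∪ Wᶜ).ncard := Nat.sInf_le hmem
    _ ≤ Fintype.card V - W.ncard + L.ncard := by omega
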